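/- Let D = D₁ × ... × Dₙ and D' = D'₁ × ... × D'ₙ be product distributions on ℝⁿ with d_k(D_i, D'_i) ≤ α_i for each i (coordinate-wise Kolmogorov distance). Then for every increasing set A ⊆ ℝⁿ (a set whose indicator is a monotone function), |P_{v~D}(v ∈ A) - P_{v~D'}(v ∈ A)| ≤ Σᵢ αᵢ. -/

import Mathlib

open MeasureTheory

lemma iic_bound (μ ν : Measure ℝ) [IsProbabilityMeasure μ] [IsProbabilityMeasure ν]
    (a : ℝ) (hks : ∀ x : ℝ, |(μ (Set.Iio x)).toReal - (ν (Set.Iio x)).toReal| ≤ a)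
    (c : ℝ) : |(μ (Set.Iic c)).toReal - (ν (Set.Iic c)).toReal| ≤ a := by
  have hset : ⋂ n : ℕ, Set.Iio (c + 1/(n+1)) = Set.Iic c := by
    ext x
    simp only [Set.mem_iInter, Set.mem_Iio, Set.mem_Iic]
    constructor
    · intro h
      by_contra hx
      push_neg at hx
      obtain ⟨n, hn⟩ := exists_nat_one_div_lt (sub_pos.2 hx)
      have := h n
      linarith
    · intro h n
      have : (0:ℝ) < 1/(n+1) := by positivity
      linarith
  have hanti : Antitone fun n : ℕ => Set.Iio (c + 1/(n+1 : ℝ)) := by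
    intro m k hmk
    apply Set.Iio_subset_Iio
    have : (1:ℝ)/(k+1) ≤ 1/(m+1) := by
      apply one_div_le_one_div_of_le (by positivity)
      exact_mod_cast add_le_add_left (Nat.cast_le.2 hmk) 1
    linarith
  have hμ : Filter.Tendsto (fun n : ℕ => μ (Set.Iio (c + 1/(n+1)))) Filter.atTop (nhds (μ (Set.Iic c))) := by
    rw [← hset]
    exact tendsto_measure_iInter_atTop (fun n => measurableSet_Iio.nullMeasurableSet)
      hanti ⟨0, measure_ne_top _ _⟩
  have hν : Filter.Tendsto (fun n : ℕ => ν (Set.Iio (c + 1/(n+1)))) Filter.atTop (nhds (ν (Set.Iic c))) := by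
    rw [← hset]
    exact tendsto_measure_iInter_atTop (fun n => measurableSet_Iio.nullMeasurableSet)
      hanti ⟨0, measure_ne_top _ _⟩
  have hμ' := (ENNReal.tendsto_toReal (measure_ne_top μ _)).comp hμ
  have hν' := (ENNReal.tendsto_toReal (measure_ne_top ν _)).comp hν
  have htend : Filter.Tendsto
      (fun n : ℕ => |(μ (Set.Iio (c + 1/(n+1)))).toReal - (ν (Set.Iio (c + 1/(n+1)))).toReal|)
      Filter.atTop (nhds |(μ (Set.Iic c)).toReal - (ν (Set.Iic c)).toReal|) :=
    (hμ'.sub hν').abs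
  exact le_of_tendsto htend (Filter.Eventually.of_forall fun n => hks _)

lemma upper_classify (S : Set ℝ) (hup : ∀ x ∈ S, ∀ y, x ≤ y → y ∈ S) :
    S = ∅ ∨ S = Set.univ ∨ (∃ c, S = Set.Ici c) ∨ (∃ c, S = Set.Ioi c) := by
  rcases S.eq_empty_or_nonempty with h | ⟨s, hs⟩
  · exact Or.inl h
  by_cases hu : S = Set.univ
  · exact Or.inr (Or.inl hu)
  obtain ⟨z, hz⟩ : ∃ z, z ∉ S := by
    by_contra h; push_neg at h; exact hu (Set.eq_univ_of_forall h)
  have hbdd : ∀ x ∈ S, z ≤ x := by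
    intro x hx
    by_contra h; push_neg at h
    exact hz (hup x hx z h.le)
  set c := sInf S with hc
  have hlb : ∀ x ∈ S, c ≤ x := fun x hx => csInf_le ⟨z, hbdd⟩ hx
  have hIoi : Set.Ioi c ⊆ S := by
    intro x hx
    obtain ⟨s', hs', hlt⟩ := exists_lt_of_csInf_lt ⟨s, hs⟩ hx
    exact hup s' hs' x hlt.le
  by_cases hcS : c ∈ S
  · refine Or.inr (Or.inr (Or.inl ⟨c, ?_⟩))
    apply Set.Subset.antisymm (fun x hx => hlb x hx)
    intro x hx
    exact hup c hcS x hx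
  · refine Or.inr (Or.inr (Or.inr ⟨c, ?_⟩))
    apply Set.Subset.antisymm
    · intro x hx
      rcases lt_or_eq_of_le (hlb x hx) with h | h
      · exact h
      · exact absurd (h ▸ hx) hcS
    · exact hIoi

lemma compl_dist (μ ν : Measure ℝ) [IsProbabilityMeasure μ] [IsProbabilityMeasure ν]
    (s : Set ℝ) (hs : MeasurableSet s) :
    |(μ sᶜ).toReal - (ν sᶜ).toReal| = |(μ s).toReal - (ν s).toReal| := by
  rw [prob_compl_eq_one_sub hs, prob_compl_eq_one_sub hs,
    ENNReal.toReal_sub_of_le prob_le_one ENNReal.one_ne_top,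
    ENNReal.toReal_sub_of_le prob_le_one ENNReal.one_ne_top]
  simp only [ENNReal.toReal_one]
  rw [abs_sub_comm]
  ring_nf

lemma onedim_real (μ ν : Measure ℝ) [IsProbabilityMeasure μ] [IsProbabilityMeasure ν]
    (a : ℝ) (hks : ∀ x : ℝ, |(μ (Set.Iio x)).toReal - (ν (Set.Iio x)).toReal| ≤ a)
    (S : Set ℝ) (hup : ∀ x ∈ S, ∀ y, x ≤ y → y ∈ S) :
    |(μ S).toReal - (ν S).toReal| ≤ a := by
  have ha : 0 ≤ a := le_trans (abs_nonneg _) (hks 0)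
  rcases upper_classify S hup with h | h | ⟨c, h⟩ | ⟨c, h⟩
  · simp [h, ha]
  · simp [h, ha]
  · subst h
    rw [show Set.Ici c = (Set.Iio c)ᶜ by simp, compl_dist μ ν _ measurableSet_Iio]
    exact hks c
  · subst h
    rw [show Set.Ioi c = (Set.Iic c)ᶜ by simp, compl_dist μ ν _ measurableSet_Iic]
    exact iic_bound μ ν a hks c

lemma onedim_ennreal (μ ν : Measure ℝ) [IsProbabilityMeasure μ] [IsProbabilityMeasure ν]
    (a : ℝ) (hks : ∀ x : ℝ, |(μ (Set.Iio x)).toReal - (ν (Set.Iio x)).toReal| ≤ a)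
    (S : Set ℝ) (hup : ∀ x ∈ S, ∀ y, x ≤ y → y ∈ S) :
    μ S ≤ ν S + ENNReal.ofReal a := by
  have h := onedim_real μ ν a hks S hup
  have h1 : (μ S).toReal ≤ (ν S).toReal + a := by
    have := abs_le.1 h; linarith [this.2]
  calc μ S = ENNReal.ofReal (μ S).toReal := (ENNReal.ofReal_toReal (measure_ne_top _ _)).symm
    _ ≤ ENNReal.ofReal ((ν S).toReal + a) := ENNReal.ofReal_le_ofReal h1
    _ = ENNReal.ofReal (ν S).toReal + ENNReal.ofReal a := ENNReal.ofReal_add ENNReal.toReal_nonneg (le_trans (abs_nonneg _) (hks 0))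
    _ = ν S + ENNReal.ofReal a := by rw [ENNReal.ofReal_toReal (measure_ne_top _ _)]

lemma aux_ind (n : ℕ) : ∀ (μ ν : Fin n → Measure ℝ)
    [∀ i, IsProbabilityMeasure (μ i)] [∀ i, IsProbabilityMeasure (ν i)]
    (α : Fin n → ℝ)
    (_ : ∀ i : Fin n, ∀ x : ℝ,
      |((μ i) (Set.Iio x)).toReal - ((ν i) (Set.Iio x)).toReal| ≤ α i)
    (A : Set (Fin n → ℝ)) (_ : MeasurableSet A)
    (_ : ∀ v ∈ A, ∀ w : Fin n → ℝ, (∀ i, v i ≤ w i) → w ∈ A),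
    Measure.pi μ A ≤ Measure.pi ν A + ∑ i, ENNReal.ofReal (α i) := by
  induction n with
  | zero =>
    intro μ ν _ _ α hks A hA hinc
    rcases A.eq_empty_or_nonempty with h | ⟨v, hv⟩
    · simp [h]
    · have hAu : A = Set.univ := Set.eq_univ_of_forall fun w => (Subsingleton.elim v w) ▸ hv
      rw [hAu]
      simp [measure_univ]
  | succ n IH =>
    intro μ ν hμp hνp α hks A hA hinc
    set e := MeasurableEquiv.piFinSuccAbove (fun _ : Fin (n+1) => ℝ) 0 with he
    set B := ⇑e.symm ⁻¹' A with hBdef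
    have hB : MeasurableSet B := e.symm.measurable hA
    have hpre : ⇑e ⁻¹' B = A := by
      ext v; simp [hBdef]
    set μ' := fun j : Fin n => μ ((0 : Fin (n+1)).succAbove j) with hμ'
    set ν' := fun j : Fin n => ν ((0 : Fin (n+1)).succAbove j) with hν'
    haveI : ∀ j, IsProbabilityMeasure (μ' j) := fun j => hμp _
    haveI : ∀ j, IsProbabilityMeasure (ν' j) := fun j => hνp _
    have hμA : Measure.pi μ A = ((μ 0).prod (Measure.pi μ')) B := by
      rw [← hpre]
      exact (measurePreserving_piFinSuccAbove μ 0).measure_preimage hB.nullMeasurableSet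
    have hνA : Measure.pi ν A = ((ν 0).prod (Measure.pi ν')) B := by
      rw [← hpre]
      exact (measurePreserving_piFinSuccAbove ν 0).measure_preimage hB.nullMeasurableSet
    -- key fact about symm
    have hsymm : ∀ (x : ℝ) (w : Fin n → ℝ), e.symm (x, w) = ((0 : Fin (n+1)).insertNth x w : Fin (n+1) → ℝ) :=
      fun x w => rfl
    have hle : ∀ (x x' : ℝ) (w w' : Fin n → ℝ), x ≤ x' → (∀ j, w j ≤ w' j) →
        ∀ k, ((0 : Fin (n+1)).insertNth x w : Fin (n+1) → ℝ) k ≤ ((0 : Fin (n+1)).insertNth x' w' : Fin (n+1) → ℝ) k := by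
      intro x x' w w' hx hw k
      induction k using Fin.cases with
      | zero => simpa using hx
      | succ j =>
        rw [← Fin.succAbove_zero, Fin.insertNth_apply_succAbove, Fin.insertNth_apply_succAbove]
        exact hw j
    set C := ∑ j : Fin n, ENNReal.ofReal (α ((0 : Fin (n+1)).succAbove j)) with hC
    -- Step A
    have stepA : ((μ 0).prod (Measure.pi μ')) B ≤ ((μ 0).prod (Measure.pi ν')) B + C := by
      rw [Measure.prod_apply hB, Measure.prod_apply hB]
      have hsec : ∀ x : ℝ, Measure.pi μ' (Prod.mk x ⁻¹' B) ≤ Measure.pi ν' (Prod.mk x ⁻¹' B) + C := by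
        intro x
        apply IH μ' ν' (fun j => α ((0 : Fin (n+1)).succAbove j))
          (fun j y => hks _ y)
        · exact hB.preimage measurable_prodMk_left
        · intro w hw w' hww'
          have : e.symm (x, w) ∈ A := hw
          have hin : e.symm (x, w') ∈ A := by
            rw [hsymm] at this ⊢
            exact hinc _ this _ (hle x x w w' le_rfl hww')
          exact hin
      calc ∫⁻ x, Measure.pi μ' (Prod.mk x ⁻¹' B) ∂(μ 0)
          ≤ ∫⁻ x, (Measure.pi ν' (Prod.mk x ⁻¹' B) + C) ∂(μ 0) := lintegral_mono hsec
        _ = ∫⁻ x, Measure.pi ν' (Prod.mk x ⁻¹' B) ∂(μ 0) + C := by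
            rw [lintegral_add_right _ measurable_const, lintegral_const]
            simp
    -- Step B
    have stepB : ((μ 0).prod (Measure.pi ν')) B ≤ ((ν 0).prod (Measure.pi ν')) B + ENNReal.ofReal (α 0) := by
      rw [Measure.prod_apply_symm hB, Measure.prod_apply_symm hB]
      have hsec : ∀ y : Fin n → ℝ, (μ 0) ((fun x => (x, y)) ⁻¹' B) ≤ (ν 0) ((fun x => (x, y)) ⁻¹' B) + ENNReal.ofReal (α 0) := by
        intro y
        apply onedim_ennreal (μ 0) (ν 0) (α 0) (hks 0)
        intro x hx x' hxx'
        have : e.symm (x, y) ∈ A := hx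
        have hin : e.symm (x', y) ∈ A := by
          rw [hsymm] at this ⊢
          exact hinc _ this _ (hle x x' y y hxx' (fun j => le_rfl))
        exact hin
      calc ∫⁻ y, (μ 0) ((fun x => (x, y)) ⁻¹' B) ∂(Measure.pi ν')
          ≤ ∫⁻ y, ((ν 0) ((fun x => (x, y)) ⁻¹' B) + ENNReal.ofReal (α 0)) ∂(Measure.pi ν') :=
            lintegral_mono hsec
        _ = ∫⁻ y, (ν 0) ((fun x => (x, y)) ⁻¹' B) ∂(Measure.pi ν') + ENNReal.ofReal (α 0) := by
            rw [lintegral_add_right _ measurable_const, lintegral_const]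
            simp
    -- combine
    rw [hμA, hνA]
    calc ((μ 0).prod (Measure.pi μ')) B
        ≤ ((μ 0).prod (Measure.pi ν')) B + C := stepA
      _ ≤ (((ν 0).prod (Measure.pi ν')) B + ENNReal.ofReal (α 0)) + C := add_le_add_left stepB C
      _ = ((ν 0).prod (Measure.pi ν')) B + ∑ i : Fin (n+1), ENNReal.ofReal (α i) := by
          have hCsum : C = ∑ j : Fin n, ENNReal.ofReal (α (Fin.succ j)) := by
            simp [hC, Fin.succAbove_zero]
          rw [Fin.sum_univ_succ, hCsum]
          ring

theorem kolmogorov_increasing_set_bound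
    (n : ℕ) (μ ν : Fin n → Measure ℝ)
    [∀ i, IsProbabilityMeasure (μ i)] [∀ i, IsProbabilityMeasure (ν i)]
    (α : Fin n → ℝ)
    (hks : ∀ i : Fin n, ∀ x : ℝ,
      |((μ i) (Set.Iio x)).toReal - ((ν i) (Set.Iio x)).toReal| ≤ α i)
    (A : Set (Fin n → ℝ)) (hA : MeasurableSet A)
    (hinc : ∀ v ∈ A, ∀ w : Fin n → ℝ, (∀ i, v i ≤ w i) → w ∈ A) :
    |((Measure.pi μ) A).toReal - ((Measure.pi ν) A).toReal| ≤ ∑ i, α i := by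
  have hα : ∀ i, 0 ≤ α i := fun i => le_trans (abs_nonneg _) (hks i 0)
  have hsum : (∑ i, ENNReal.ofReal (α i)) = ENNReal.ofReal (∑ i, α i) :=
    (ENNReal.ofReal_sum_of_nonneg (fun i _ => hα i)).symm
  have h1 := aux_ind n μ ν α hks A hA hinc
  have h2 := aux_ind n ν μ α (fun i x => by rw [abs_sub_comm]; exact hks i x) A hA hinc
  rw [hsum] at h1 h2
  have key : ∀ (ρ σ : Measure (Fin n → ℝ)), ρ A ≤ σ A + ENNReal.ofReal (∑ i, α i) →
      σ A ≠ ⊤ → ρ A ≠ ⊤ → (ρ A).toReal - (σ A).toReal ≤ ∑ i, α i := by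
    intro ρ σ h hσ hρ
    have := ENNReal.toReal_mono (by finiteness) h
    rw [ENNReal.toReal_add hσ ENNReal.ofReal_ne_top,
      ENNReal.toReal_ofReal (Finset.sum_nonneg fun i _ => hα i)] at this
    linarith
  rw [abs_sub_le_iff]
  exact ⟨key _ _ h1 (measure_ne_top _ _) (measure_ne_top _ _),
    key _ _ h2 (measure_ne_top _ _) (measure_ne_top _ _)⟩
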